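/- Let a, b, c be the side lengths of a triangle with 0 < a,b,c ≤ r ≤ 1, admitting comparison triangles in the unit sphere S², the hyperbolic plane H², and the Euclidean plane ℝ², and suppose the Euclidean comparison triangle is δ-non-degenerate. Let α₊, α₋, α₀ be the angles at the vertex opposite side a in the spherical, hyperbolic, and Euclidean comparison triangles, determined by cos α₊ = (cos a − cos b cos c)/(sin b sin c), cos α₋ = (cosh b cosh c − cosh a)/(sinh b sinh c), cos α₀ = (b²+c²−a²)/(2bc). Then |α₊ − α₋| ≤ C(δ) r² for a constant C(δ) depending only on δ. -/

import Mathlib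

open Real

lemma exp_taylor4' {x : ℝ} (hx : |x| ≤ 1) :
    |Real.exp x - (1 + x + x^2/2 + x^3/6)| ≤ x^4 * (5/96) := by
  have h := Real.exp_bound hx (by norm_num : 0 < 4)
  have hs : (∑ i ∈ Finset.range 4, x ^ i / (Nat.factorial i : ℝ)) = 1 + x + x^2/2 + x^3/6 := by
    norm_num [Finset.sum_range_succ, Nat.factorial]
  have hx4 : |x|^4 = x^4 := by
    rw [← abs_pow, abs_of_nonneg (by positivity)]
  rw [hs, hx4] at h
  calc |Real.exp x - (1 + x + x^2/2 + x^3/6)| ≤ x^4 * (↑(Nat.succ 4) / (↑(Nat.factorial 4) * 4)) := h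
    _ = x^4 * (5/96) := by norm_num [Nat.factorial]

lemma cosh_taylor' {x : ℝ} (hx : |x| ≤ 1) :
    |Real.cosh x - (1 + x^2/2)| ≤ x^4 * (5/96) := by
  have h1 := exp_taylor4' hx
  have h2 := exp_taylor4' (x := -x) (by rwa [abs_neg])
  have key : Real.cosh x - (1 + x^2/2) =
      ((Real.exp x - (1 + x + x^2/2 + x^3/6)) +
       (Real.exp (-x) - (1 + (-x) + (-x)^2/2 + (-x)^3/6)))/2 := by
    rw [Real.cosh_eq]; ring
  rw [key]
  have h2' : |Real.exp (-x) - (1 + (-x) + (-x)^2/2 + (-x)^3/6)| ≤ x^4 * (5/96) := by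
    rwa [show ((-x):ℝ)^4 = x^4 by ring] at h2
  calc |_ / 2| = |(Real.exp x - (1 + x + x^2/2 + x^3/6)) +
       (Real.exp (-x) - (1 + (-x) + (-x)^2/2 + (-x)^3/6))| / 2 := by
        rw [abs_div]; norm_num
    _ ≤ (x^4 * (5/96) + x^4 * (5/96))/2 := by
        gcongr
        exact (abs_add_le _ _).trans (by gcongr)
    _ = x^4 * (5/96) := by ring

lemma sinh_taylor' {x : ℝ} (hx : |x| ≤ 1) :
    |Real.sinh x - (x + x^3/6)| ≤ x^4 * (5/96) := by
  have h1 := exp_taylor4' hx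
  have h2 : |Real.exp (-x) - (1 + (-x) + (-x)^2/2 + (-x)^3/6)| ≤ x^4 * (5/96) := by
    have := exp_taylor4' (x := -x) (by rwa [abs_neg])
    rwa [show ((-x):ℝ)^4 = x^4 by ring] at this
  have key : Real.sinh x - (x + x^3/6) =
      ((Real.exp x - (1 + x + x^2/2 + x^3/6)) -
       (Real.exp (-x) - (1 + (-x) + (-x)^2/2 + (-x)^3/6)))/2 := by
    rw [Real.sinh_eq]; ring
  rw [key]
  calc |_ / 2| = |(Real.exp x - (1 + x + x^2/2 + x^3/6)) -
       (Real.exp (-x) - (1 + (-x) + (-x)^2/2 + (-x)^3/6))| / 2 := by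
        rw [abs_div]; norm_num
    _ ≤ (x^4 * (5/96) + x^4 * (5/96))/2 := by
        gcongr
        exact (abs_sub _ _).trans (by gcongr)
    _ = x^4 * (5/96) := by ring

set_option maxHeartbeats 2000000 in

lemma tri5' (x1 x2 x3 x4 x5 : ℝ) : |x1 - x2 - x3 - x4 - x5| ≤ |x1|+|x2|+|x3|+|x4|+|x5| := by
  calc |x1 - x2 - x3 - x4 - x5| ≤ |x1 - x2 - x3 - x4| + |x5| := abs_sub _ _
    _ ≤ (|x1 - x2 - x3| + |x4|) + |x5| := by linarith [abs_sub (x1-x2-x3) x4]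
    _ ≤ ((|x1 - x2| + |x3|) + |x4|) + |x5| := by linarith [abs_sub (x1-x2) x3]
    _ ≤ _ := by linarith [abs_sub x1 x2]

set_option maxHeartbeats 1000000 in
lemma abs_PD_cos {a b c : ℝ} (ha : 0 < a) (ha1 : a ≤ 1) (hb : 0 < b) (hb1 : b ≤ 1)
    (hc : 0 < c) (hc1 : c ≤ 1) :
    |(Real.cos a - Real.cos b * Real.cos c) - (b^2+c^2-a^2)/2|
      ≤ (a^4+b^4+c^4)*(6/96) + (b*c)^2/4 := by
  have habs : ∀ x : ℝ, 0 < x → x ≤ 1 → |Real.cos x - (1 - x^2/2)| ≤ x^4*(5/96) := by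
    intro x h0 h1
    have := Real.cos_bound (x := x) (by rw [abs_of_pos h0]; exact h1)
    rwa [show |x|^4 = x^4 by rw [← abs_pow, abs_of_nonneg (by positivity)]] at this
  set ea := Real.cos a - (1 - a^2/2) with hea_def
  set eb := Real.cos b - (1 - b^2/2) with heb_def
  set ec := Real.cos c - (1 - c^2/2) with hec_def
  have hid : (Real.cos a - Real.cos b * Real.cos c) - (b^2+c^2-a^2)/2
      = ea - eb*(1-c^2/2) - ec*(1-b^2/2) - eb*ec - b^2*c^2/4 := by
    rw [hea_def, heb_def, hec_def]; ring
  have hc2 : (0:ℝ) ≤ 1 - c^2/2 := by nlinarith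
  have hc2' : 1 - c^2/2 ≤ 1 := by nlinarith
  have hb2 : (0:ℝ) ≤ 1 - b^2/2 := by nlinarith
  have hb2' : 1 - b^2/2 ≤ 1 := by nlinarith
  have e2 : |eb*(1-c^2/2)| ≤ b^4*(5/96) := by
    rw [abs_mul, abs_of_nonneg hc2]
    calc |eb| * (1-c^2/2) ≤ (b^4*(5/96))*1 :=
          mul_le_mul (habs b hb hb1) hc2' hc2 (by positivity)
      _ = b^4*(5/96) := by ring
  have e3 : |ec*(1-b^2/2)| ≤ c^4*(5/96) := by
    rw [abs_mul, abs_of_nonneg hb2]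
    calc |ec| * (1-b^2/2) ≤ (c^4*(5/96))*1 :=
          mul_le_mul (habs c hc hc1) hb2' hb2 (by positivity)
      _ = c^4*(5/96) := by ring
  have e4 : |eb*ec| ≤ b^4*(1/96) := by
    rw [abs_mul]
    calc |eb| * |ec| ≤ (b^4*(5/96))*(c^4*(5/96)) :=
          mul_le_mul (habs b hb hb1) (habs c hc hc1) (abs_nonneg _) (by positivity)
      _ ≤ b^4*(1/96) := by nlinarith [pow_pos hb 4, pow_le_one₀ hc.le hc1 (n := 4)]
  have e5 : |b^2*c^2/4| = (b*c)^2/4 := by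
    rw [abs_of_nonneg (by positivity)]; ring
  rw [hid]
  calc |ea - eb*(1-c^2/2) - ec*(1-b^2/2) - eb*ec - b^2*c^2/4|
      ≤ |ea| + |eb*(1-c^2/2)| + |ec*(1-b^2/2)| + |eb*ec| + |b^2*c^2/4| := tri5' _ _ _ _ _
    _ ≤ a^4*(5/96) + b^4*(5/96) + c^4*(5/96) + b^4*(1/96) + (b*c)^2/4 := by
        rw [e5]; linarith [habs a ha ha1]
    _ ≤ (a^4+b^4+c^4)*(6/96) + (b*c)^2/4 := by nlinarith [pow_pos ha 4, pow_pos hc 4]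

set_option maxHeartbeats 1000000 in
lemma abs_PD_cosh {a b c : ℝ} (ha : 0 < a) (ha1 : a ≤ 1) (hb : 0 < b) (hb1 : b ≤ 1)
    (hc : 0 < c) (hc1 : c ≤ 1) :
    |(Real.cosh b * Real.cosh c - Real.cosh a) - (b^2+c^2-a^2)/2|
      ≤ (a^4+b^4+c^4)*(9/96) + (b*c)^2/4 := by
  have habs : ∀ x : ℝ, 0 < x → x ≤ 1 → |Real.cosh x - (1 + x^2/2)| ≤ x^4*(5/96) := by
    intro x h0 h1
    exact cosh_taylor' (by rw [abs_of_pos h0]; exact h1)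
  set ea := Real.cosh a - (1 + a^2/2) with hea_def
  set eb := Real.cosh b - (1 + b^2/2) with heb_def
  set ec := Real.cosh c - (1 + c^2/2) with hec_def
  have hid : (Real.cosh b * Real.cosh c - Real.cosh a) - (b^2+c^2-a^2)/2
      = eb*(1+c^2/2) + ec*(1+b^2/2) + eb*ec + b^2*c^2/4 - ea := by
    rw [hea_def, heb_def, hec_def]; ring
  have hc2 : (0:ℝ) ≤ 1 + c^2/2 := by positivity
  have hc2' : 1 + c^2/2 ≤ 3/2 := by nlinarith
  have hb2 : (0:ℝ) ≤ 1 + b^2/2 := by positivity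
  have hb2' : 1 + b^2/2 ≤ 3/2 := by nlinarith
  have e2 : |eb*(1+c^2/2)| ≤ b^4*(8/96) := by
    rw [abs_mul, abs_of_nonneg hc2]
    calc |eb| * (1+c^2/2) ≤ (b^4*(5/96))*(3/2) :=
          mul_le_mul (habs b hb hb1) hc2' hc2 (by positivity)
      _ ≤ b^4*(8/96) := by nlinarith [pow_pos hb 4]
  have e3 : |ec*(1+b^2/2)| ≤ c^4*(8/96) := by
    rw [abs_mul, abs_of_nonneg hb2]
    calc |ec| * (1+b^2/2) ≤ (c^4*(5/96))*(3/2) :=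
          mul_le_mul (habs c hc hc1) hb2' hb2 (by positivity)
      _ ≤ c^4*(8/96) := by nlinarith [pow_pos hc 4]
  have e4 : |eb*ec| ≤ b^4*(1/96) := by
    rw [abs_mul]
    calc |eb| * |ec| ≤ (b^4*(5/96))*(c^4*(5/96)) :=
          mul_le_mul (habs b hb hb1) (habs c hc hc1) (abs_nonneg _) (by positivity)
      _ ≤ b^4*(1/96) := by nlinarith [pow_pos hb 4, pow_le_one₀ hc.le hc1 (n := 4)]
  have e5 : |b^2*c^2/4| = (b*c)^2/4 := by
    rw [abs_of_nonneg (by positivity)]; ring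
  have tri : |eb*(1+c^2/2) + ec*(1+b^2/2) + eb*ec + b^2*c^2/4 - ea|
      ≤ |eb*(1+c^2/2)| + |ec*(1+b^2/2)| + |eb*ec| + |b^2*c^2/4| + |ea| := by
    calc |eb*(1+c^2/2) + ec*(1+b^2/2) + eb*ec + b^2*c^2/4 - ea|
        ≤ |eb*(1+c^2/2) + ec*(1+b^2/2) + eb*ec + b^2*c^2/4| + |ea| := abs_sub _ _
      _ ≤ (|eb*(1+c^2/2) + ec*(1+b^2/2) + eb*ec| + |b^2*c^2/4|) + |ea| := by
          linarith [abs_add_le (eb*(1+c^2/2) + ec*(1+b^2/2) + eb*ec) (b^2*c^2/4)]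
      _ ≤ ((|eb*(1+c^2/2) + ec*(1+b^2/2)| + |eb*ec|) + |b^2*c^2/4|) + |ea| := by
          linarith [abs_add_le (eb*(1+c^2/2) + ec*(1+b^2/2)) (eb*ec)]
      _ ≤ _ := by linarith [abs_add_le (eb*(1+c^2/2)) (ec*(1+b^2/2))]
  rw [hid]
  calc |eb*(1+c^2/2) + ec*(1+b^2/2) + eb*ec + b^2*c^2/4 - ea|
      ≤ |eb*(1+c^2/2)| + |ec*(1+b^2/2)| + |eb*ec| + |b^2*c^2/4| + |ea| := tri
    _ ≤ b^4*(8/96) + c^4*(8/96) + b^4*(1/96) + (b*c)^2/4 + a^4*(5/96) := by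
        rw [e5]; linarith [habs a ha ha1]
    _ ≤ (a^4+b^4+c^4)*(9/96) + (b*c)^2/4 := by nlinarith [pow_pos ha 4, pow_pos hc 4]


lemma arccos_window' {x δ : ℝ} (hδ0 : 0 < δ)
    (h1 : δ < Real.arccos x) (h2 : Real.arccos x < π - δ) :
    -1 ≤ x ∧ x ≤ 1 ∧ x < Real.cos δ ∧ -Real.cos δ < x := by
  have hx1 : x ≤ 1 := by
    by_contra h
    have h0 : Real.arccos x = 0 := Real.arccos_eq_zero.2 (le_of_lt (not_le.mp h))
    rw [h0] at h1; linarith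
  have hx2 : -1 ≤ x := by
    by_contra h
    have h0 : Real.arccos x = π := Real.arccos_eq_pi.2 (le_of_lt (not_le.mp h))
    rw [h0] at h2; linarith
  have hc : Real.cos (Real.arccos x) = x := Real.cos_arccos hx2 hx1
  refine ⟨hx2, hx1, ?_, ?_⟩
  · have := Real.cos_lt_cos_of_nonneg_of_le_pi hδ0.le (Real.arccos_le_pi x) h1
    rwa [hc] at this
  · have := Real.cos_lt_cos_of_nonneg_of_le_pi (Real.arccos_nonneg x)
      (by linarith : π - δ ≤ π) h2
    rwa [hc, Real.cos_pi_sub] at this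

lemma sin_lower' {θ w : ℝ} (hθ0 : 0 ≤ θ) (hθ : θ ≤ π/2) (h1 : θ ≤ w) (h2 : w ≤ π - θ) :
    Real.sin θ ≤ Real.sin w := by
  rcases le_total w (π/2) with h | h
  · exact Real.sin_le_sin_of_le_of_le_pi_div_two (by linarith) h h1
  · rw [← Real.sin_pi_sub w]
    exact Real.sin_le_sin_of_le_of_le_pi_div_two (by linarith) (by linarith) (by linarith)

lemma angle_diff_le' {u v θ : ℝ} (hθ0 : 0 < θ) (hθ : θ ≤ π/2)
    (hu1 : θ ≤ u) (hu2 : u ≤ π - θ) (hv1 : θ ≤ v) (hv2 : v ≤ π - θ) :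
    |u - v| ≤ π / (2 * Real.sin θ) * |Real.cos u - Real.cos v| := by
  have hπ := Real.pi_pos
  wlog huv : v ≤ u generalizing u v
  · have := this hv1 hv2 hu1 hu2 (le_of_lt (not_le.mp huv))
    rwa [abs_sub_comm, abs_sub_comm (Real.cos v)] at this
  have hsθ : 0 < Real.sin θ := Real.sin_pos_of_pos_of_lt_pi hθ0 (by linarith)
  have hmid : Real.sin θ ≤ Real.sin ((u+v)/2) := sin_lower' hθ0.le hθ (by linarith) (by linarith)
  have hj : 2/π * ((u-v)/2) ≤ Real.sin ((u-v)/2) :=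
    Real.mul_le_sin (by linarith) (by linarith)
  have hj0 : 0 ≤ Real.sin ((u-v)/2) :=
    le_trans (mul_nonneg (by positivity) (by linarith)) hj
  have hcc : Real.cos v - Real.cos u = 2 * Real.sin ((u+v)/2) * Real.sin ((u-v)/2) := by
    rw [Real.cos_sub_cos, show (v-u)/2 = -((u-v)/2) by ring, Real.sin_neg]; ring
  have hj' : u - v ≤ Real.sin ((u-v)/2) * π := by
    rw [← div_le_iff₀ hπ]
    calc (u-v)/π = 2/π * ((u-v)/2) := by ring
      _ ≤ _ := hj
  have hcu : Real.cos u ≤ Real.cos v :=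
    Real.cos_le_cos_of_nonneg_of_le_pi (by linarith) (by linarith) huv
  rw [abs_of_nonneg (by linarith : (0:ℝ) ≤ u - v), abs_of_nonpos (by linarith), neg_sub]
  rw [div_mul_eq_mul_div, le_div_iff₀ (by positivity), hcc]
  nlinarith [mul_le_mul_of_nonneg_right hmid hj0, mul_le_mul_of_nonneg_left hj' hsθ.le]


set_option maxHeartbeats 1000000 in
lemma sin_prod_bounds {b c r : ℝ} (hb : 0 < b) (hc : 0 < c)
    (hbr : b ≤ r) (hcr : c ≤ r) (hr1 : r ≤ 1) :
    b*c*(9/16) ≤ Real.sin b * Real.sin c ∧ Real.sin b * Real.sin c ≤ b*c ∧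
      b*c - Real.sin b * Real.sin c ≤ b*c*(r^2/2) := by
  have hb1 : b ≤ 1 := hbr.trans hr1
  have hc1 : c ≤ 1 := hcr.trans hr1
  have hsinlb : ∀ x : ℝ, 0 < x → x ≤ 1 → x*(1 - x^2/4) ≤ Real.sin x := by
    intro x h0 h1
    have h := abs_le.mp (Real.sin_bound (x := x) (by rw [abs_of_pos h0]; exact h1))
    rw [abs_of_pos h0] at h
    nlinarith [pow_pos h0 3, pow_pos h0 4, mul_nonneg (pow_pos h0 3).le (by nlinarith : (0:ℝ) ≤ 1 - x^2)]
  have hsb := hsinlb b hb hb1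
  have hsc := hsinlb c hc hc1
  have hsbu := Real.sin_le hb.le
  have hscu := Real.sin_le hc.le
  have hsbp : 0 < Real.sin b := lt_of_lt_of_le (by nlinarith) hsb
  have hscp : 0 < Real.sin c := lt_of_lt_of_le (by nlinarith) hsc
  have hprodlb : (b*(1-b^2/4))*(c*(1-c^2/4)) ≤ Real.sin b * Real.sin c := by
    calc (b*(1-b^2/4))*(c*(1-c^2/4)) ≤ Real.sin b * (c*(1-c^2/4)) :=
          mul_le_mul_of_nonneg_right hsb (by nlinarith)
      _ ≤ Real.sin b * Real.sin c := mul_le_mul_of_nonneg_left hsc hsbp.le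
  refine ⟨?_, ?_, ?_⟩
  · calc b*c*(9/16) = (b*(3/4))*(c*(3/4)) := by ring
      _ ≤ (b*(1-b^2/4))*(c*(1-c^2/4)) :=
          mul_le_mul (by nlinarith) (by nlinarith) (by nlinarith) (by nlinarith)
      _ ≤ _ := hprodlb
  · calc Real.sin b * Real.sin c ≤ b * Real.sin c := mul_le_mul_of_nonneg_right hsbu hscp.le
      _ ≤ b*c := mul_le_mul_of_nonneg_left hscu hb.le
  · have hb2r : b^2 ≤ r^2 := by nlinarith
    have hc2r : c^2 ≤ r^2 := by nlinarith
    have h1 : b*c*b^2 ≤ b*c*r^2 := by nlinarith [mul_pos hb hc]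
    have h2 : b*c*c^2 ≤ b*c*r^2 := by nlinarith [mul_pos hb hc]
    nlinarith [hprodlb, mul_nonneg (mul_nonneg hb.le hc.le)
      (mul_nonneg (sq_nonneg b) (sq_nonneg c))]

set_option maxHeartbeats 1000000 in
lemma sinh_prod_bounds {b c r : ℝ} (hb : 0 < b) (hc : 0 < c)
    (hbr : b ≤ r) (hcr : c ≤ r) (hr1 : r ≤ 1) :
    b*c ≤ Real.sinh b * Real.sinh c ∧
      Real.sinh b * Real.sinh c - b*c ≤ b*c*r^2 := by
  have hb1 : b ≤ 1 := hbr.trans hr1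
  have hc1 : c ≤ 1 := hcr.trans hr1
  have hlb : ∀ x : ℝ, 0 < x → x ≤ 1 → x ≤ Real.sinh x := by
    intro x h0 h1
    have h := abs_le.mp (sinh_taylor' (x := x) (by rw [abs_of_pos h0]; exact h1))
    nlinarith [pow_pos h0 3, pow_pos h0 4]
  have hub : ∀ x : ℝ, 0 < x → x ≤ 1 → Real.sinh x ≤ x*(1 + x^2/4) := by
    intro x h0 h1
    have h := abs_le.mp (sinh_taylor' (x := x) (by rw [abs_of_pos h0]; exact h1))
    nlinarith [pow_pos h0 3, pow_pos h0 4]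
  have hsb := hlb b hb hb1
  have hsc := hlb c hc hc1
  have hsbu := hub b hb hb1
  have hscu := hub c hc hc1
  have hsbp : 0 < Real.sinh b := lt_of_lt_of_le hb hsb
  have hscp : 0 < Real.sinh c := lt_of_lt_of_le hc hsc
  constructor
  · calc b*c ≤ Real.sinh b * c := mul_le_mul_of_nonneg_right hsb hc.le
      _ ≤ Real.sinh b * Real.sinh c := mul_le_mul_of_nonneg_left hsc hsbp.le
  · have hprodub : Real.sinh b * Real.sinh c ≤ (b*(1+b^2/4))*(c*(1+c^2/4)) := by
      calc Real.sinh b * Real.sinh c ≤ (b*(1+b^2/4)) * Real.sinh c :=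
            mul_le_mul_of_nonneg_right hsbu hscp.le
        _ ≤ (b*(1+b^2/4))*(c*(1+c^2/4)) :=
            mul_le_mul_of_nonneg_left hscu (by positivity)
    have hb2r : b^2 ≤ r^2 := by nlinarith
    have hc2r : c^2 ≤ r^2 := by nlinarith
    have h1 : b*c*b^2 ≤ b*c*r^2 := by nlinarith [mul_pos hb hc]
    have h2 : b*c*c^2 ≤ b*c*r^2 := by nlinarith [mul_pos hb hc]
    have h3 : b*c*(b^2*c^2) ≤ b*c*r^2 := by
      have hc21 : c^2 ≤ 1 := by nlinarith
      have : b^2*c^2 ≤ r^2 := by nlinarith [mul_le_mul hb2r hc21 (sq_nonneg c) (sq_nonneg r)]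
      nlinarith [mul_pos hb hc]
    nlinarith [hprodub]

set_option maxHeartbeats 1000000 in
lemma mono_bounds {a b c r s : ℝ} (ha : 0 < a) (hb : 0 < b) (hc : 0 < c)
    (har : a ≤ r) (hbr : b ≤ r) (hcr : c ≤ r) (hr1 : r ≤ 1)
    (hs0 : 0 < s) (hs1 : s ≤ 1)
    (hba : a*s ≤ b) (hbc : c*s ≤ b) (hca : a*s ≤ c) (hcb : b*s ≤ c) :
    a^4*s^2 ≤ (b*c)*r^2 ∧ b^4*s^2 ≤ (b*c)*r^2 ∧ c^4*s^2 ≤ (b*c)*r^2 ∧ (b*c)*s^2 ≤ r^2 := by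
  have ha2r : a^2 ≤ r^2 := by nlinarith
  have hb2r : b^2 ≤ r^2 := by nlinarith
  have hc2r : c^2 ≤ r^2 := by nlinarith
  have hbc0 : (0:ℝ) < b*c := mul_pos hb hc
  have has2 : a^2*s^2 ≤ b*c := by nlinarith [mul_le_mul hba hca (mul_pos ha hs0).le hb.le]
  refine ⟨?_, ?_, ?_, ?_⟩
  · nlinarith [mul_le_mul has2 ha2r (sq_nonneg a) hbc0.le]
  · have hb3 : b^3 ≤ b*r^2 := by nlinarith
    have := mul_le_mul hcb hb3 (by positivity) hc.le
    nlinarith [pow_pos hb 4, mul_pos (pow_pos hb 4) hs0]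
  · have hc3 : c^3 ≤ c*r^2 := by nlinarith
    have := mul_le_mul hbc hc3 (by positivity) hb.le
    nlinarith [pow_pos hc 4, mul_pos (pow_pos hc 4) hs0]
  · have hbcr : b*c ≤ r^2 := by nlinarith [mul_le_mul hbr hcr hc.le (lt_of_lt_of_le hb hbr).le]
    have hs21 : s^2 ≤ 1 := by nlinarith
    nlinarith [mul_le_mul hbcr hs21 (sq_nonneg s) (sq_nonneg r)]

set_option maxHeartbeats 1000000 in
lemma assemble {P Q D bc r s q k : ℝ} (hbc : 0 < bc) (hQpos : 0 < Q)
    (hq : 0 < q) (hkq : k ≤ 2*q)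
    (hQlb : bc*q ≤ Q) (hkey : |P*bc - D*Q| * s^2 ≤ bc^2*r^2*k) (hs0 : 0 < s) :
    |P/Q - D/bc| ≤ 2*r^2/s^2 := by
  have hQbc : (0:ℝ) < Q*bc := mul_pos hQpos hbc
  have heq : P/Q - D/bc = (P*bc - D*Q)/(Q*bc) := by field_simp
  rw [heq, abs_div, abs_of_pos hQbc]
  have hk0 : 0 ≤ bc^2*r^2*k := le_trans (by positivity) hkey
  have hup : |P*bc - D*Q| ≤ (bc^2*r^2*k)/s^2 := by
    rw [le_div_iff₀ (by positivity)]; exact hkey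
  have hdown : bc^2*q ≤ Q*bc := by nlinarith
  calc |P*bc - D*Q| / (Q*bc)
      ≤ ((bc^2*r^2*k)/s^2) / (bc^2*q) :=
        div_le_div₀ (by positivity) hup (by positivity) hdown
    _ = (r^2/s^2)*(k/q) := by field_simp
    _ ≤ (r^2/s^2)*2 := by
        apply mul_le_mul_of_nonneg_left _ (by positivity)
        rw [div_le_iff₀ hq]; linarith
    _ = 2*r^2/s^2 := by ring

set_option maxHeartbeats 1000000 in
lemma sph_close {a b c r s : ℝ} (ha : 0 < a) (hb : 0 < b) (hc : 0 < c)
    (har : a ≤ r) (hbr : b ≤ r) (hcr : c ≤ r) (hr1 : r ≤ 1)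
    (hs0 : 0 < s) (hs1 : s ≤ 1)
    (hba : a*s ≤ b) (hbc : c*s ≤ b) (hca : a*s ≤ c) (hcb : b*s ≤ c)
    (hD : |(b^2+c^2-a^2)/2| ≤ b*c) :
    |(Real.cos a - Real.cos b * Real.cos c)/(Real.sin b * Real.sin c)
      - ((b^2+c^2-a^2)/2)/(b*c)| ≤ 2*r^2/s^2 := by
  have ha1 : a ≤ 1 := har.trans hr1
  have hb1 : b ≤ 1 := hbr.trans hr1
  have hc1 : c ≤ 1 := hcr.trans hr1
  have hbc0 : (0:ℝ) < b*c := mul_pos hb hc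
  have hs21 : s^2 ≤ 1 := by nlinarith
  obtain ⟨hQlb, hQub, hQgap⟩ := sin_prod_bounds hb hc hbr hcr hr1
  obtain ⟨k1, k2, k3, k4⟩ := mono_bounds ha hb hc har hbr hcr hr1 hs0 hs1 hba hbc hca hcb
  have hPD := abs_PD_cos ha ha1 hb hb1 hc hc1
  set P := Real.cos a - Real.cos b * Real.cos c with hP_def
  set D := (b^2+c^2-a^2)/2 with hD_def
  set Q := Real.sin b * Real.sin c with hQ_def
  have hQpos : 0 < Q := lt_of_lt_of_le (by positivity) hQlb
  have hnum : |P*(b*c) - D*Q| ≤ |P - D| * (b*c) + |D| * ((b*c) - Q) := by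
    have hid2 : P*(b*c) - D*Q = (P-D)*(b*c) + D*((b*c)-Q) := by ring
    rw [hid2]
    calc |(P-D)*(b*c) + D*((b*c)-Q)| ≤ |(P-D)*(b*c)| + |D*((b*c)-Q)| := abs_add_le _ _
      _ = |P-D| * (b*c) + |D| * ((b*c)-Q) := by
          rw [abs_mul (P-D), abs_mul D, abs_of_nonneg hbc0.le,
            abs_of_nonneg (show (0:ℝ) ≤ b*c - Q from by linarith)]
  have hA : |P - D| * (b*c)*s^2 ≤ (b*c)^2*r^2*(42/96) := by
    have h := mul_le_mul_of_nonneg_right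
      (mul_le_mul_of_nonneg_right hPD hbc0.le) (sq_nonneg s)
    nlinarith [mul_le_mul_of_nonneg_right k1 hbc0.le,
      mul_le_mul_of_nonneg_right k2 hbc0.le,
      mul_le_mul_of_nonneg_right k3 hbc0.le,
      mul_le_mul_of_nonneg_right k4 (sq_nonneg (b*c))]
  have hB : |D| * ((b*c) - Q)*s^2 ≤ (b*c)^2*r^2*(1/2) := by
    have h1 : |D| * ((b*c) - Q) ≤ (b*c)*((b*c)*(r^2/2)) :=
      mul_le_mul hD hQgap (by linarith) hbc0.le
    nlinarith [mul_le_mul_of_nonneg_right h1 (sq_nonneg s),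
      mul_le_mul_of_nonneg_left hs21 (show (0:ℝ) ≤ (b*c)^2*(r^2/2) by positivity)]
  have hkey : |P*(b*c) - D*Q| * s^2 ≤ (b*c)^2*r^2*(15/16) := by
    have h := mul_le_mul_of_nonneg_right hnum (sq_nonneg s)
    nlinarith [hA, hB]
  exact assemble hbc0 hQpos (by norm_num : (0:ℝ) < 9/16) (by norm_num) hQlb hkey hs0

set_option maxHeartbeats 1000000 in
lemma hyp_close {a b c r s : ℝ} (ha : 0 < a) (hb : 0 < b) (hc : 0 < c)
    (har : a ≤ r) (hbr : b ≤ r) (hcr : c ≤ r) (hr1 : r ≤ 1)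
    (hs0 : 0 < s) (hs1 : s ≤ 1)
    (hba : a*s ≤ b) (hbc : c*s ≤ b) (hca : a*s ≤ c) (hcb : b*s ≤ c)
    (hD : |(b^2+c^2-a^2)/2| ≤ b*c) :
    |(Real.cosh b * Real.cosh c - Real.cosh a)/(Real.sinh b * Real.sinh c)
      - ((b^2+c^2-a^2)/2)/(b*c)| ≤ 2*r^2/s^2 := by
  have ha1 : a ≤ 1 := har.trans hr1
  have hb1 : b ≤ 1 := hbr.trans hr1
  have hc1 : c ≤ 1 := hcr.trans hr1
  have hbc0 : (0:ℝ) < b*c := mul_pos hb hc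
  have hs21 : s^2 ≤ 1 := by nlinarith
  obtain ⟨hQlb, hQgap⟩ := sinh_prod_bounds hb hc hbr hcr hr1
  obtain ⟨k1, k2, k3, k4⟩ := mono_bounds ha hb hc har hbr hcr hr1 hs0 hs1 hba hbc hca hcb
  have hPD := abs_PD_cosh ha ha1 hb hb1 hc hc1
  set P := Real.cosh b * Real.cosh c - Real.cosh a with hP_def
  set D := (b^2+c^2-a^2)/2 with hD_def
  set Q := Real.sinh b * Real.sinh c with hQ_def
  have hQpos : 0 < Q := lt_of_lt_of_le hbc0 hQlb
  have hnum : |P*(b*c) - D*Q| ≤ |P - D| * (b*c) + |D| * (Q - (b*c)) := by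
    have hid2 : P*(b*c) - D*Q = (P-D)*(b*c) - D*(Q-(b*c)) := by ring
    rw [hid2]
    calc |(P-D)*(b*c) - D*(Q-(b*c))| ≤ |(P-D)*(b*c)| + |D*(Q-(b*c))| := abs_sub _ _
      _ = |P-D| * (b*c) + |D| * (Q-(b*c)) := by
          rw [abs_mul (P-D), abs_mul D, abs_of_nonneg hbc0.le,
            abs_of_nonneg (show (0:ℝ) ≤ Q - b*c from by linarith)]
  have hA : |P - D| * (b*c)*s^2 ≤ (b*c)^2*r^2*(51/96) := by
    have h := mul_le_mul_of_nonneg_right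
      (mul_le_mul_of_nonneg_right hPD hbc0.le) (sq_nonneg s)
    nlinarith [mul_le_mul_of_nonneg_right k1 hbc0.le,
      mul_le_mul_of_nonneg_right k2 hbc0.le,
      mul_le_mul_of_nonneg_right k3 hbc0.le,
      mul_le_mul_of_nonneg_right k4 (sq_nonneg (b*c))]
  have hB : |D| * (Q - (b*c))*s^2 ≤ (b*c)^2*r^2 := by
    have h1 : |D| * (Q - (b*c)) ≤ (b*c)*((b*c)*r^2) :=
      mul_le_mul hD hQgap (by linarith) hbc0.le
    nlinarith [mul_le_mul_of_nonneg_right h1 (sq_nonneg s),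
      mul_le_mul_of_nonneg_left hs21 (show (0:ℝ) ≤ (b*c)^2*r^2 by positivity)]
  have hkey : |P*(b*c) - D*Q| * s^2 ≤ (b*c)^2*r^2*(147/96) := by
    have h := mul_le_mul_of_nonneg_right hnum (sq_nonneg s)
    nlinarith [hA, hB]
  exact assemble hbc0 hQpos (by norm_num : (0:ℝ) < 1) (by norm_num) (by linarith) hkey hs0

set_option maxHeartbeats 4000000 in
theorem stmt_18 (δ : ℝ) (hδ : 0 < δ) :
    ∃ C > (0 : ℝ), ∀ a b c r : ℝ,
      0 < a → 0 < b → 0 < c →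
      a ≤ r → b ≤ r → c ≤ r → r ≤ 1 →
      a < b + c → b < a + c → c < a + b →
      -- the Euclidean comparison triangle is δ-non-degenerate:
      (δ < arccos ((b ^ 2 + c ^ 2 - a ^ 2) / (2 * b * c)) ∧
        arccos ((b ^ 2 + c ^ 2 - a ^ 2) / (2 * b * c)) < π - δ) →
      (δ < arccos ((a ^ 2 + c ^ 2 - b ^ 2) / (2 * a * c)) ∧
        arccos ((a ^ 2 + c ^ 2 - b ^ 2) / (2 * a * c)) < π - δ) →
      (δ < arccos ((a ^ 2 + b ^ 2 - c ^ 2) / (2 * a * b)) ∧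
        arccos ((a ^ 2 + b ^ 2 - c ^ 2) / (2 * a * b)) < π - δ) →
      |arccos ((Real.cos a - Real.cos b * Real.cos c) / (Real.sin b * Real.sin c)) -
        arccos ((Real.cosh b * Real.cosh c - Real.cosh a) / (Real.sinh b * Real.sinh c))|
        ≤ C * r ^ 2 := by
  rcases le_or_gt (π/2) δ with hbig | hδ2
  · refine ⟨1, one_pos, fun a b c r ha hb hc har hbr hcr hr1 t1 t2 t3 h1 h2 h3 => ?_⟩
    exfalso
    have := h1.1.trans h1.2
    linarith
  · have hπ := Real.pi_pos
    have hsδ0 : 0 < Real.sin δ := Real.sin_pos_of_pos_of_lt_pi hδ (by linarith)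
    have hsδ1 : Real.sin δ ≤ 1 := Real.sin_le_one δ
    have hcδ0 : 0 < Real.cos δ := Real.cos_pos_of_mem_Ioo ⟨by linarith, hδ2⟩
    have hcδ1 : Real.cos δ < 1 := by
      have h := Real.cos_lt_cos_of_nonneg_of_le_pi le_rfl (by linarith) hδ
      rwa [Real.cos_zero] at h
    set s := Real.sin δ with hs_def
    set m : ℝ := (1 + Real.cos δ)/2 with hm_def
    have hm0 : 0 < m := by rw [hm_def]; linarith
    have hm1 : m < 1 := by rw [hm_def]; linarith
    set σ : ℝ := Real.sqrt (1 - m^2) with hσ_def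
    have hσ0 : 0 < σ := Real.sqrt_pos.2 (by nlinarith)
    have hσ1 : σ ≤ 1 := by rw [hσ_def]; exact Real.sqrt_le_one.2 (by nlinarith)
    have hden : 0 < s^2*(1-Real.cos δ)*σ :=
      mul_pos (mul_pos (by positivity) (by linarith)) hσ0
    have hdle : s^2*(1-Real.cos δ)*σ ≤ 2*σ*s^2 := by
      nlinarith [mul_pos (mul_pos hσ0 hsδ0) hsδ0]
    have hπden : π*(s^2*(1-Real.cos δ)*σ) ≤ π*(s^2*(1-Real.cos δ)) := by
      have h0 : (0:ℝ) ≤ π*(s^2*(1-Real.cos δ)) := by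
        apply mul_nonneg hπ.le (mul_nonneg (by positivity) (by linarith))
      nlinarith [mul_pos (mul_pos hπ (mul_pos (show (0:ℝ) < s^2 by positivity) (show (0:ℝ) < 1 - Real.cos δ by linarith))) hσ0]
    refine ⟨4*π/(s^2*(1-Real.cos δ)*σ), div_pos (by positivity) hden, ?_⟩
    intro a b c r ha hb hc har hbr hcr hr1 t1 t2 t3 h1 h2 h3
    obtain ⟨hw1a, hw1b, hw1c, hw1d⟩ := arccos_window' hδ h1.1 h1.2
    obtain ⟨-, -, hw2c, -⟩ := arccos_window' hδ h2.1 h2.2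
    obtain ⟨-, -, hw3c, -⟩ := arccos_window' hδ h3.1 h3.2
    have hpyth : s^2 + Real.cos δ^2 = 1 := by rw [hs_def]; exact Real.sin_sq_add_cos_sq δ
    -- side comparabilities
    have hsq2 : a^2 + c^2 - b^2 < 2*a*c*Real.cos δ := by
      have h := (div_lt_iff₀ (by positivity : (0:ℝ) < 2*a*c)).1 hw2c
      linarith
    have hsq3 : a^2 + b^2 - c^2 < 2*a*b*Real.cos δ := by
      have h := (div_lt_iff₀ (by positivity : (0:ℝ) < 2*a*b)).1 hw3c
      linarith
    have hba : a*s ≤ b := by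
      nlinarith [sq_nonneg (c - a*Real.cos δ), mul_pos ha hsδ0, sq_nonneg (b + a*s)]
    have hbc : c*s ≤ b := by
      nlinarith [sq_nonneg (a - c*Real.cos δ), mul_pos hc hsδ0, sq_nonneg (b + c*s)]
    have hca : a*s ≤ c := by
      nlinarith [sq_nonneg (b - a*Real.cos δ), mul_pos ha hsδ0, sq_nonneg (c + a*s)]
    have hcb : b*s ≤ c := by
      nlinarith [sq_nonneg (a - b*Real.cos δ), mul_pos hb hsδ0, sq_nonneg (c + b*s)]
    have hbc0 : (0:ℝ) < b*c := mul_pos hb hc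
    have hD : |(b^2+c^2-a^2)/2| ≤ b*c := by
      rw [abs_le]
      have h1' := (div_le_one (by positivity : (0:ℝ) < 2*b*c)).1 hw1b
      have h2' : (-1)*(2*b*c) ≤ b^2+c^2-a^2 := by
        rw [← le_div_iff₀ (by positivity : (0:ℝ) < 2*b*c)]
        exact hw1a
      constructor <;> nlinarith
    set X := (Real.cos a - Real.cos b * Real.cos c)/(Real.sin b * Real.sin c) with hX_def
    set Y := (Real.cosh b * Real.cosh c - Real.cosh a)/(Real.sinh b * Real.sinh c) with hY_def
    set x₀ := ((b^2+c^2-a^2)/2)/(b*c) with hx0_def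
    have hX := sph_close ha hb hc har hbr hcr hr1 hsδ0 hsδ1 hba hbc hca hcb hD
    have hY := hyp_close ha hb hc har hbr hcr hr1 hsδ0 hsδ1 hba hbc hca hcb hD
    have hx0eq : x₀ = (b^2+c^2-a^2)/(2*b*c) := by
      rw [hx0_def, div_div, ← mul_assoc]
    have hx₀ : |x₀| ≤ Real.cos δ := by
      rw [hx0eq, abs_le]
      exact ⟨by linarith [hw1d], hw1c.le⟩
    have hXY : |X - Y| ≤ 4*r^2/s^2 := by
      have hxy : (X - x₀) - (Y - x₀) = X - Y := by ring
      calc |X - Y| = |(X - x₀) - (Y - x₀)| := by rw [hxy]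
        _ ≤ |X - x₀| + |Y - x₀| := abs_sub _ _
        _ ≤ 2*r^2/s^2 + 2*r^2/s^2 := add_le_add hX hY
        _ = 4*r^2/s^2 := by ring
    rcases le_or_gt (2*r^2/s^2) ((1 - Real.cos δ)/2) with hcase | hcase
    · have hXm : |X| ≤ m := by
        have hxx : x₀ + (X - x₀) = X := by ring
        calc |X| = |x₀ + (X - x₀)| := by rw [hxx]
          _ ≤ |x₀| + |X - x₀| := abs_add_le _ _
          _ ≤ Real.cos δ + (1-Real.cos δ)/2 := add_le_add hx₀ (hX.trans hcase)
          _ = m := by rw [hm_def]; ring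
      have hYm : |Y| ≤ m := by
        have hyy : x₀ + (Y - x₀) = Y := by ring
        calc |Y| = |x₀ + (Y - x₀)| := by rw [hyy]
          _ ≤ |x₀| + |Y - x₀| := abs_add_le _ _
          _ ≤ Real.cos δ + (1-Real.cos δ)/2 := add_le_add hx₀ (hY.trans hcase)
          _ = m := by rw [hm_def]; ring
      have hX1 : -1 ≤ X := by linarith [(abs_le.mp hXm).1]
      have hX2 : X ≤ 1 := by linarith [(abs_le.mp hXm).2]
      have hY1 : -1 ≤ Y := by linarith [(abs_le.mp hYm).1]
      have hY2 : Y ≤ 1 := by linarith [(abs_le.mp hYm).2]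
      set θ := Real.arccos m with hθ_def
      have hθ0 : 0 < θ := Real.arccos_pos.2 hm1
      have hθh : θ ≤ π/2 := Real.arccos_le_pi_div_two.2 hm0.le
      have hsinθ : Real.sin θ = σ := by rw [hθ_def, Real.sin_arccos, hσ_def]
      have arccos_anti : ∀ x y : ℝ, x ≤ y → Real.arccos y ≤ Real.arccos x := by
        intro x y h
        simp only [Real.arccos_eq_pi_div_two_sub_arcsin]
        linarith [Real.monotone_arcsin h]
      have hu1 : θ ≤ Real.arccos X := by
        rw [hθ_def]; exact arccos_anti X m (abs_le.mp hXm).2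
      have hu2 : Real.arccos X ≤ π - θ := by
        rw [hθ_def, ← Real.arccos_neg m]
        exact arccos_anti (-m) X (by linarith [(abs_le.mp hXm).1])
      have hv1 : θ ≤ Real.arccos Y := by
        rw [hθ_def]; exact arccos_anti Y m (abs_le.mp hYm).2
      have hv2 : Real.arccos Y ≤ π - θ := by
        rw [hθ_def, ← Real.arccos_neg m]
        exact arccos_anti (-m) Y (by linarith [(abs_le.mp hYm).1])
      have hdiff := angle_diff_le' hθ0 hθh hu1 hu2 hv1 hv2
      rw [Real.cos_arccos hX1 hX2, Real.cos_arccos hY1 hY2, hsinθ] at hdiff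
      calc |Real.arccos X - Real.arccos Y| ≤ π/(2*σ) * |X - Y| := hdiff
        _ ≤ π/(2*σ) * (4*r^2/s^2) := mul_le_mul_of_nonneg_left hXY (by positivity)
        _ = (4*π*r^2)/(2*σ*s^2) := by ring
        _ ≤ (4*π*r^2)/(s^2*(1-Real.cos δ)*σ) :=
            div_le_div_of_nonneg_left (by positivity) hden hdle
        _ = 4*π/(s^2*(1-Real.cos δ)*σ)*r^2 := by ring
    · have hu0 := Real.arccos_nonneg X
      have huπ := Real.arccos_le_pi X
      have hv0 := Real.arccos_nonneg Y
      have hvπ := Real.arccos_le_pi Y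
      have habs : |Real.arccos X - Real.arccos Y| ≤ π := by
        rw [abs_le]; constructor <;> linarith
      have hr2 : s^2*(1-Real.cos δ) < 4*r^2 := by
        have h := mul_lt_mul_of_pos_right hcase (show (0:ℝ) < s^2 by positivity)
        rw [div_mul_cancel₀] at h
        · linarith
        · positivity
      calc |Real.arccos X - Real.arccos Y| ≤ π := habs
        _ ≤ 4*π/(s^2*(1-Real.cos δ)*σ)*r^2 := by
            rw [div_mul_eq_mul_div, le_div_iff₀ hden]
            have h2 := mul_lt_mul_of_pos_left hr2 hπ
            linarith [hπden]
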